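/- (Lemma A.3) For Adam, under assumptions (S1)-(S3) and (A1)-(A2), for all k ∈ ℕ and all θ ∈ ℝ^d: E[(θ_k − θ)ᵀ m_{k−1}] ≤ D(θ)M^{1/4}/(v_*^{1/4} β_{1k}) · √(σ²/b + G²) + α_k √(β̃_{2k})/(2√(v_*) β_{1k} β̃_{1k}) · (σ²/b + G²) + D(θ) G · β̂_{1k}/β_{1k}. -/

import Mathlib

open MeasureTheory Filter Real


private lemma adam_comp_abs_le_norm {d : ℕ} (x : EuclideanSpace ℝ (Fin d)) (i : Fin d) :
    |x i| ≤ ‖x‖ := by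
  rw [EuclideanSpace.norm_eq, ← Real.sqrt_sq_eq_abs]
  apply Real.sqrt_le_sqrt
  calc x i ^ 2 = ‖x i‖ ^ 2 := by rw [Real.norm_eq_abs, sq_abs]
  _ ≤ ∑ j, ‖x j‖ ^ 2 :=
    Finset.single_le_sum (f := fun j => ‖x j‖ ^ 2) (fun j _ => sq_nonneg _) (Finset.mem_univ i)

private lemma adam_cross {Ω : Type*} [MeasurableSpace Ω] (μ : Measure Ω) [IsProbabilityMeasure μ]
    {d : ℕ}
    (X gg : Ω → EuclideanSpace ℝ (Fin d)) (h : EuclideanSpace ℝ (Fin d) → EuclideanSpace ℝ (Fin d))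
    (hX : Measurable X) (hg : Measurable gg) (hh : Continuous h) {G B : ℝ}
    (hhbd : ∀ᵐ ω ∂μ, ‖h (X ω)‖ ≤ G) (hgbd : ∀ᵐ ω ∂μ, ‖gg ω‖ ≤ B)
    (hunb : μ[gg | MeasurableSpace.comap X inferInstance] =ᵐ[μ] fun ω => h (X ω)) :
    ∫ ω, (inner ℝ (gg ω) (h (X ω)) : ℝ) ∂μ = ∫ ω, ‖h (X ω)‖^2 ∂μ := by
  have hm : MeasurableSpace.comap X inferInstance ≤ _ := hX.comap_le
  have hXm : Measurable[MeasurableSpace.comap X inferInstance] X := Measurable.of_comap_le le_rfl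
  have hhXmeas : Measurable fun ω => h (X ω) := hh.measurable.comp hX
  have hgint : Integrable gg μ := (integrable_const B).mono' hg.aestronglyMeasurable hgbd
  have hhint : Integrable (fun ω => h (X ω)) μ :=
    (integrable_const G).mono' hhXmeas.aestronglyMeasurable hhbd
  have hgi_int : ∀ i : Fin d, Integrable (fun ω => gg ω i) μ := by
    intro i
    simpa using (EuclideanSpace.proj i : EuclideanSpace ℝ (Fin d) →L[ℝ] ℝ).integrable_comp hgint
  have hhi_int : ∀ i : Fin d, Integrable (fun ω => h (X ω) i) μ := by
    intro i
    simpa using (EuclideanSpace.proj i : EuclideanSpace ℝ (Fin d) →L[ℝ] ℝ).integrable_comp hhint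
  have hhi_meas : ∀ i : Fin d,
      StronglyMeasurable[MeasurableSpace.comap X inferInstance] (fun ω => h (X ω) i) := by
    intro i
    have hc : Continuous fun y : EuclideanSpace ℝ (Fin d) => h y i :=
      (EuclideanSpace.proj i).continuous.comp hh
    exact (hc.measurable.comp hXm).stronglyMeasurable
  have hAi : ∀ i : Fin d,
      (fun ω => h (X ω) i) =ᵐ[μ] μ[fun ω => gg ω i|MeasurableSpace.comap X inferInstance] := by
    intro i
    refine ae_eq_condExp_of_forall_setIntegral_eq hm (hgi_int i)
      (fun s _ _ => (hhi_int i).integrableOn) (fun s hs hμs => ?_)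
      ((hhi_meas i).aestronglyMeasurable)
    have hset : ∫ ω in s, h (X ω) ∂μ = ∫ ω in s, gg ω ∂μ := by
      rw [← setIntegral_condExp hm hgint hs]
      exact integral_congr_ae (ae_restrict_of_ae hunb.symm)
    have h1 : ∫ ω in s, h (X ω) i ∂μ = (EuclideanSpace.proj (𝕜 := ℝ) i) (∫ ω in s, h (X ω) ∂μ) :=
      (EuclideanSpace.proj (𝕜 := ℝ) i).integral_comp_comm (hhint.integrableOn (s := s))
    have h2 : ∫ ω in s, gg ω i ∂μ = (EuclideanSpace.proj (𝕜 := ℝ) i) (∫ ω in s, gg ω ∂μ) :=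
      (EuclideanSpace.proj (𝕜 := ℝ) i).integral_comp_comm (hgint.integrableOn (s := s))
    rw [h1, h2, hset]
  have hhi_bd : ∀ i : Fin d, ∀ᵐ ω ∂μ, ‖h (X ω) i‖ ≤ G := by
    intro i
    filter_upwards [hhbd] with ω hω
    exact (adam_comp_abs_le_norm (h (X ω)) i).trans hω
  have key : ∀ i : Fin d, ∫ ω, gg ω i * h (X ω) i ∂μ = ∫ ω, h (X ω) i * h (X ω) i ∂μ := by
    intro i
    have hpull := condExp_stronglyMeasurable_mul_of_bound hm (hhi_meas i) (hgi_int i) G (hhi_bd i)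
    calc ∫ ω, gg ω i * h (X ω) i ∂μ
        = ∫ ω, ((fun ω => h (X ω) i) * fun ω => gg ω i) ω ∂μ := by
          simp only [Pi.mul_apply]; congr 1; funext ω; ring
      _ = ∫ ω, (μ[(fun ω => h (X ω) i) * fun ω => gg ω i|MeasurableSpace.comap X inferInstance]) ω ∂μ :=
          (integral_condExp hm).symm
      _ = ∫ ω, h (X ω) i * (μ[fun ω => gg ω i|MeasurableSpace.comap X inferInstance]) ω ∂μ :=
          integral_congr_ae hpull
      _ = ∫ ω, h (X ω) i * h (X ω) i ∂μ := by
          refine integral_congr_ae ?_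
          filter_upwards [hAi i] with ω hω
          rw [← hω]
  have hprod_int : ∀ i : Fin d, Integrable (fun ω => gg ω i * h (X ω) i) μ := by
    intro i
    refine (integrable_const (|B| * |G|)).mono'
      (((hgi_int i).aestronglyMeasurable.aemeasurable.mul
        (hhi_int i).aestronglyMeasurable.aemeasurable).aestronglyMeasurable) ?_
    filter_upwards [hgbd, hhbd] with ω h1 h2
    have e1 : |gg ω i| ≤ ‖gg ω‖ := adam_comp_abs_le_norm _ i
    have e2 : |h (X ω) i| ≤ ‖h (X ω)‖ := adam_comp_abs_le_norm _ i
    calc ‖gg ω i * h (X ω) i‖ = |gg ω i| * |h (X ω) i| := by rw [Real.norm_eq_abs, abs_mul]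
    _ ≤ |B| * |G| := by
        apply mul_le_mul _ _ (abs_nonneg _) (abs_nonneg _)
        · exact e1.trans (h1.trans (le_abs_self B))
        · exact e2.trans (h2.trans (le_abs_self G))
  have hprod_int2 : ∀ i : Fin d, Integrable (fun ω => h (X ω) i * h (X ω) i) μ := by
    intro i
    refine (integrable_const (|G| * |G|)).mono'
      (((hhi_int i).aestronglyMeasurable.aemeasurable.mul
        (hhi_int i).aestronglyMeasurable.aemeasurable).aestronglyMeasurable) ?_
    filter_upwards [hhi_bd i] with ω h2
    have h2' : |h (X ω) i| ≤ |G| := (h2.trans (le_abs_self G))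
    calc ‖h (X ω) i * h (X ω) i‖ = |h (X ω) i| * |h (X ω) i| := by rw [Real.norm_eq_abs, abs_mul]
    _ ≤ |G| * |G| := mul_le_mul h2' h2' (abs_nonneg _) (abs_nonneg _)
  calc ∫ ω, (inner ℝ (gg ω) (h (X ω)) : ℝ) ∂μ
      = ∫ ω, ∑ i, gg ω i * h (X ω) i ∂μ := by
        refine integral_congr_ae (Eventually.of_forall fun ω => ?_)
        show (inner ℝ (gg ω) (h (X ω)) : ℝ) = ∑ i, gg ω i * h (X ω) i
        simp [PiLp.inner_apply, RCLike.inner_apply, conj_trivial]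
        exact Finset.sum_congr rfl fun i _ => mul_comm _ _
    _ = ∑ i, ∫ ω, gg ω i * h (X ω) i ∂μ := integral_finset_sum _ (fun i _ => hprod_int i)
    _ = ∑ i, ∫ ω, h (X ω) i * h (X ω) i ∂μ := Finset.sum_congr rfl (fun i _ => key i)
    _ = ∫ ω, ∑ i, h (X ω) i * h (X ω) i ∂μ := (integral_finset_sum _ (fun i _ => hprod_int2 i)).symm
    _ = ∫ ω, ‖h (X ω)‖^2 ∂μ := by
        refine integral_congr_ae (Eventually.of_forall fun ω => ?_)
        show ∑ i, h (X ω) i * h (X ω) i = ‖h (X ω)‖ ^ 2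
        rw [EuclideanSpace.norm_eq, Real.sq_sqrt (Finset.sum_nonneg fun i _ => sq_nonneg _)]
        simp [Real.norm_eq_abs, sq_abs, pow_two]
private lemma adam_gsq {Ω : Type*} [MeasurableSpace Ω] (μ : Measure Ω) [IsProbabilityMeasure μ] {d : ℕ}
    (X gg : Ω → EuclideanSpace ℝ (Fin d)) (h : EuclideanSpace ℝ (Fin d) → EuclideanSpace ℝ (Fin d))
    (hX : Measurable X) (hg : Measurable gg) (hh : Continuous h) {G B σb : ℝ}
    (hhbd : ∀ᵐ ω ∂μ, ‖h (X ω)‖ ≤ G) (hgbd : ∀ᵐ ω ∂μ, ‖gg ω‖ ≤ B) (hG : 0 < G)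
    (hcross : ∫ ω, (inner ℝ (gg ω) (h (X ω)) : ℝ) ∂μ = ∫ ω, ‖h (X ω)‖^2 ∂μ)
    (hvar : ∫ ω, ‖gg ω - h (X ω)‖ ^ 2 ∂μ ≤ σb) :
    ∫ ω, ‖gg ω‖^2 ∂μ ≤ σb + G^2 := by
  have hhXmeas : Measurable fun ω => h (X ω) := hh.measurable.comp hX
  have hBG : ∀ᵐ ω ∂μ, ‖gg ω‖ ≤ B ∧ ‖h (X ω)‖ ≤ G := hgbd.and hhbd
  -- integrability
  have hA_int : Integrable (fun ω => ‖gg ω - h (X ω)‖^2) μ := by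
    refine (integrable_const ((|B| + |G|)^2)).mono'
      ((hg.sub hhXmeas).norm.pow_const 2).aestronglyMeasurable ?_
    filter_upwards [hBG] with ω ⟨h1, h2⟩
    have h3 : ‖gg ω - h (X ω)‖ ≤ |B| + |G| := by
      calc ‖gg ω - h (X ω)‖ ≤ ‖gg ω‖ + ‖h (X ω)‖ := norm_sub_le _ _
      _ ≤ |B| + |G| := add_le_add (h1.trans (le_abs_self _)) (h2.trans (le_abs_self _))
    have h4 : (0:ℝ) ≤ ‖gg ω - h (X ω)‖ := norm_nonneg _
    rw [Real.norm_eq_abs, abs_of_nonneg (sq_nonneg _)]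
    nlinarith
  have hI_int : Integrable (fun ω => (inner ℝ (gg ω) (h (X ω)) : ℝ)) μ := by
    refine (integrable_const (|B| * |G|)).mono'
      (hg.inner hhXmeas).aestronglyMeasurable ?_
    filter_upwards [hBG] with ω ⟨h1, h2⟩
    calc ‖(inner ℝ (gg ω) (h (X ω)) : ℝ)‖ ≤ ‖gg ω‖ * ‖h (X ω)‖ := norm_inner_le_norm _ _
    _ ≤ |B| * |G| := mul_le_mul (h1.trans (le_abs_self _)) (h2.trans (le_abs_self _))
        (norm_nonneg _) (abs_nonneg _)
  have hH_int : Integrable (fun ω => ‖h (X ω)‖^2) μ := by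
    refine (integrable_const (G^2)).mono' (hhXmeas.norm.pow_const 2).aestronglyMeasurable ?_
    filter_upwards [hhbd] with ω h2
    rw [Real.norm_eq_abs, abs_of_nonneg (sq_nonneg _)]
    nlinarith [norm_nonneg (h (X ω))]
  have hHbd : ∫ ω, ‖h (X ω)‖^2 ∂μ ≤ G^2 := by
    calc ∫ ω, ‖h (X ω)‖^2 ∂μ ≤ ∫ _ω, G^2 ∂μ := by
          refine integral_mono_ae hH_int (integrable_const _) ?_
          filter_upwards [hhbd] with ω h2
          nlinarith [norm_nonneg (h (X ω))]
    _ = G^2 := by simp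
  have hsplit : ∫ ω, ‖gg ω‖^2 ∂μ
      = ∫ ω, ‖gg ω - h (X ω)‖^2 ∂μ + (2 * ∫ ω, (inner ℝ (gg ω) (h (X ω)) : ℝ) ∂μ
          - ∫ ω, ‖h (X ω)‖^2 ∂μ) := by
    calc ∫ ω, ‖gg ω‖^2 ∂μ
        = ∫ ω, (‖gg ω - h (X ω)‖^2 + (2 * (inner ℝ (gg ω) (h (X ω)) : ℝ) - ‖h (X ω)‖^2)) ∂μ := by
          refine integral_congr_ae (Eventually.of_forall fun ω => ?_)
          show ‖gg ω‖^2 = ‖gg ω - h (X ω)‖^2 + (2 * (inner ℝ (gg ω) (h (X ω)) : ℝ) - ‖h (X ω)‖^2)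
          have hns := norm_add_sq_real (gg ω - h (X ω)) (h (X ω))
          simp only [sub_add_cancel] at hns
          have h5 : (inner ℝ (gg ω - h (X ω)) (h (X ω)) : ℝ)
              = (inner ℝ (gg ω) (h (X ω)) : ℝ) - ‖h (X ω)‖^2 := by
            rw [inner_sub_left, real_inner_self_eq_norm_sq]
          rw [hns, h5]; ring
      _ = ∫ ω, ‖gg ω - h (X ω)‖^2 ∂μ
            + ∫ ω, (2 * (inner ℝ (gg ω) (h (X ω)) : ℝ) - ‖h (X ω)‖^2) ∂μ :=
          integral_add hA_int ((hI_int.const_mul 2).sub hH_int)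
      _ = ∫ ω, ‖gg ω - h (X ω)‖^2 ∂μ
            + (∫ ω, 2 * (inner ℝ (gg ω) (h (X ω)) : ℝ) ∂μ - ∫ ω, ‖h (X ω)‖^2 ∂μ) := by
          rw [integral_sub (hI_int.const_mul 2) hH_int]
      _ = ∫ ω, ‖gg ω - h (X ω)‖^2 ∂μ
            + (2 * ∫ ω, (inner ℝ (gg ω) (h (X ω)) : ℝ) ∂μ - ∫ ω, ‖h (X ω)‖^2 ∂μ) := by
          rw [integral_const_mul]
  rw [hsplit, hcross]
  linarith

private lemma adam_young (s Dx a w ip : ℝ) (hs : 0 < s) (hD : 0 < Dx)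
    (h1 : ip ≤ a * w) (ha : 0 ≤ a) (hw : 0 ≤ w) :
    ip ≤ (s / Dx * a ^ 2 + w ^ 2 / (s / Dx)) / 2 := by
  have hl : 0 < s / Dx := div_pos hs hD
  have h2 : 2 * (s / Dx) * ip ≤ (s / Dx) ^ 2 * a ^ 2 + w ^ 2 := by
    nlinarith [sq_nonneg (s / Dx * a - w)]
  have h3 : ip ≤ ((s / Dx) ^ 2 * a ^ 2 + w ^ 2) / (2 * (s / Dx)) := by
    rw [le_div_iff₀ (by positivity)]
    linarith
  refine h3.trans_eq ?_
  field_simp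

private lemma adam_final (s Dx : ℝ) (hs : 0 < s) (hD : 0 < Dx) :
    (s / Dx * Dx ^ 2 + s ^ 2 / (s / Dx)) / 2 = Dx * s := by
  field_simp
  ring

set_option maxHeartbeats 1000000 in
theorem adam_lemmaA3
    {Ω : Type*} [MeasurableSpace Ω] (μ : Measure Ω) [IsProbabilityMeasure μ]
    {d : ℕ} (f : EuclideanSpace ℝ (Fin d) → ℝ)
    (θ m mp v g dvec : ℕ → Ω → EuclideanSpace ℝ (Fin d))
    (vhat : ℕ → Ω → Fin d → ℝ)
    (α β1 β2 : ℕ → ℝ)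
    (σ2 b G B M vstar : ℝ)
    (D : EuclideanSpace ℝ (Fin d) → ℝ)
    (hf : ContDiff ℝ 1 f)
    (hb : 0 < b) (hσ2 : 0 ≤ σ2) (hG : 0 < G) (hB : 0 < B)
    (hαpos : ∀ k, 0 < α k)
    (hmp0 : ∀ ω, mp 0 ω = 0)
    (hmrec : ∀ k ω, m k ω = β1 k • mp k ω + (1 - β1 k) • g k ω)
    (hmpshift : ∀ k ω, mp (k+1) ω = m k ω)
    (hv0 : ∀ ω (i : Fin d), v 0 ω i = (1 - β2 0) * (g 0 ω i) ^ 2)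
    (hvrec : ∀ k ω (i : Fin d), v (k+1) ω i = β2 (k+1) * v k ω i + (1 - β2 (k+1)) * (g (k+1) ω i) ^ 2)
    (hvhat : ∀ k ω (i : Fin d), vhat k ω i = v k ω i / (1 - (β2 k) ^ (k+1)))
    (hdvec : ∀ k ω (i : Fin d), dvec k ω i = -(m k ω i / (1 - (β1 k) ^ (k+1))) / Real.sqrt (vhat k ω i))
    (hθrec : ∀ k ω, θ (k+1) ω = θ k ω + α k • dvec k ω)
    (hθmeas : ∀ k, Measurable (θ k)) (hgmeas : ∀ k, Measurable (g k))
    (hunbiased : ∀ k, μ[g k | MeasurableSpace.comap (θ k) inferInstance]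
        =ᵐ[μ] fun ω => gradient f (θ k ω))
    (hvar : ∀ k, ∫ ω, ‖g k ω - gradient f (θ k ω)‖ ^ 2 ∂μ ≤ σ2 / b)
    (hGbd : ∀ k, ∀ᵐ ω ∂μ, ‖gradient f (θ k ω)‖ ≤ G)
    (hBbd : ∀ k, ∀ᵐ ω ∂μ, ‖g k ω‖ ≤ B)
    (hDpos : ∀ x, 0 < D x)
    (hDbd : ∀ x k, ∀ᵐ ω ∂μ, ‖θ k ω - x‖ ≤ D x)
    (hM : ∀ k, ∀ᵐ ω ∂μ, ∀ i, (g k ω i) ^ 2 ≤ M)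
    (hvstar : 0 < vstar)
    (hvstarle : ∀ k, ∀ᵐ ω ∂μ, ∀ i, vstar ≤ v k ω i)
    (hβ1mem : ∀ k, β1 k ∈ Set.Ioo (0:ℝ) 1) (hβ2mem : ∀ k, β2 k ∈ Set.Ico (0:ℝ) 1)
    :
    ∀ (k : ℕ) (x : EuclideanSpace ℝ (Fin d)),
      ∫ ω, (inner ℝ (θ k ω - x) (mp k ω) : ℝ) ∂μ ≤
        D x * M ^ ((1:ℝ)/4) / (vstar ^ ((1:ℝ)/4) * β1 k) * Real.sqrt (σ2 / b + G ^ 2)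
        + α k * Real.sqrt (1 - (β2 k) ^ (k+1)) / (2 * Real.sqrt vstar * β1 k * (1 - (β1 k) ^ (k+1))) * (σ2 / b + G ^ 2)
        + D x * G * ((1 - β1 k) / β1 k) := by
  intro k x
  have hβ1k := hβ1mem k
  have hβ2k := hβ2mem k
  have hSpos : 0 < σ2 / b + G ^ 2 :=
    add_pos_of_nonneg_of_pos (div_nonneg hσ2 hb.le) (by positivity)
  have hgradcont : Continuous (gradient f) :=
    (InnerProductSpace.toDual ℝ _).symm.continuous.comp (hf.continuous_fderiv one_ne_zero)
  have hgS : ∀ j, ∫ ω, ‖g j ω‖ ^ 2 ∂μ ≤ σ2 / b + G ^ 2 := fun j =>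
    adam_gsq μ (θ j) (g j) (gradient f) (hθmeas j) (hgmeas j) hgradcont (hGbd j) (hBbd j) hG
      (adam_cross μ (θ j) (g j) (gradient f) (hθmeas j) (hgmeas j) hgradcont (hGbd j) (hBbd j)
        (hunbiased j))
      (hvar j)
  have hmpmeas : ∀ j, Measurable (mp j) := by
    intro j
    induction j with
    | zero =>
        have h0 : mp 0 = fun _ => (0 : EuclideanSpace ℝ (Fin d)) := funext hmp0
        rw [h0]; exact measurable_const
    | succ n ih =>
        have h0 : mp (n + 1) = fun ω => β1 n • mp n ω + (1 - β1 n) • g n ω := by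
          funext ω; rw [hmpshift, hmrec]
        rw [h0]
        exact (ih.const_smul (β1 n)).add ((hgmeas n).const_smul (1 - β1 n))
  have hmpbd : ∀ j, ∀ᵐ ω ∂μ, ‖mp j ω‖ ≤ B := by
    intro j
    induction j with
    | zero =>
        filter_upwards with ω
        rw [hmp0]; simpa using hB.le
    | succ n ih =>
        filter_upwards [ih, hBbd n] with ω h1 h2
        rw [hmpshift, hmrec]
        calc ‖β1 n • mp n ω + (1 - β1 n) • g n ω‖
            ≤ ‖β1 n • mp n ω‖ + ‖(1 - β1 n) • g n ω‖ := norm_add_le _ _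
          _ = β1 n * ‖mp n ω‖ + (1 - β1 n) * ‖g n ω‖ := by
              rw [norm_smul, norm_smul, Real.norm_eq_abs, Real.norm_eq_abs,
                abs_of_pos (hβ1mem n).1, abs_of_pos (sub_pos.mpr (hβ1mem n).2)]
          _ ≤ B := by nlinarith [(hβ1mem n).1, (hβ1mem n).2, norm_nonneg (mp n ω)]
  have hg2_int : ∀ j, Integrable (fun ω => ‖g j ω‖ ^ 2) μ := by
    intro j
    refine (integrable_const (B ^ 2)).mono' ((hgmeas j).norm.pow_const 2).aestronglyMeasurable ?_
    filter_upwards [hBbd j] with ω h1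
    rw [Real.norm_eq_abs, abs_of_nonneg (sq_nonneg _)]
    nlinarith [norm_nonneg (g j ω)]
  have hmp2_int : ∀ j, Integrable (fun ω => ‖mp j ω‖ ^ 2) μ := by
    intro j
    refine (integrable_const (B ^ 2)).mono' ((hmpmeas j).norm.pow_const 2).aestronglyMeasurable ?_
    filter_upwards [hmpbd j] with ω h1
    rw [Real.norm_eq_abs, abs_of_nonneg (sq_nonneg _)]
    nlinarith [norm_nonneg (mp j ω)]
  have hmpS : ∀ j, ∫ ω, ‖mp j ω‖ ^ 2 ∂μ ≤ σ2 / b + G ^ 2 := by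
    intro j
    induction j with
    | zero =>
        have h0 : (fun ω => ‖mp 0 ω‖ ^ 2) = fun _ => (0 : ℝ) := by
          funext ω; rw [hmp0]; simp
        rw [h0]
        simpa using hSpos.le
    | succ n ih =>
        have hptineq : ∀ ω, ‖mp (n + 1) ω‖ ^ 2
            ≤ β1 n * ‖mp n ω‖ ^ 2 + (1 - β1 n) * ‖g n ω‖ ^ 2 := by
          intro ω
          rw [hmpshift, hmrec]
          have h1 : ‖β1 n • mp n ω + (1 - β1 n) • g n ω‖
              ≤ β1 n * ‖mp n ω‖ + (1 - β1 n) * ‖g n ω‖ := by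
            calc ‖β1 n • mp n ω + (1 - β1 n) • g n ω‖
                ≤ ‖β1 n • mp n ω‖ + ‖(1 - β1 n) • g n ω‖ := norm_add_le _ _
              _ = β1 n * ‖mp n ω‖ + (1 - β1 n) * ‖g n ω‖ := by
                  rw [norm_smul, norm_smul, Real.norm_eq_abs, Real.norm_eq_abs,
                    abs_of_pos (hβ1mem n).1, abs_of_pos (sub_pos.mpr (hβ1mem n).2)]
          nlinarith [norm_nonneg (mp n ω), norm_nonneg (g n ω), (hβ1mem n).1, (hβ1mem n).2,
            norm_nonneg (β1 n • mp n ω + (1 - β1 n) • g n ω),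
            mul_nonneg (mul_nonneg (hβ1mem n).1.le (sub_pos.mpr (hβ1mem n).2).le)
              (sq_nonneg (‖mp n ω‖ - ‖g n ω‖))]
        calc ∫ ω, ‖mp (n + 1) ω‖ ^ 2 ∂μ
            ≤ ∫ ω, (β1 n * ‖mp n ω‖ ^ 2 + (1 - β1 n) * ‖g n ω‖ ^ 2) ∂μ :=
              integral_mono_ae (hmp2_int (n + 1))
                (((hmp2_int n).const_mul _).add ((hg2_int n).const_mul _))
                (Eventually.of_forall hptineq)
          _ = β1 n * ∫ ω, ‖mp n ω‖ ^ 2 ∂μ + (1 - β1 n) * ∫ ω, ‖g n ω‖ ^ 2 ∂μ := by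
              rw [integral_add ((hmp2_int n).const_mul _) ((hg2_int n).const_mul _),
                integral_const_mul, integral_const_mul]
          _ ≤ β1 n * (σ2 / b + G ^ 2) + (1 - β1 n) * (σ2 / b + G ^ 2) :=
              add_le_add (mul_le_mul_of_nonneg_left ih (hβ1mem n).1.le)
                (mul_le_mul_of_nonneg_left (hgS n) (sub_pos.mpr (hβ1mem n).2).le)
          _ = σ2 / b + G ^ 2 := by ring
  have hDx := hDpos x
  have hmain : ∫ ω, (inner ℝ (θ k ω - x) (mp k ω) : ℝ) ∂μ
      ≤ D x * Real.sqrt (σ2 / b + G ^ 2) := by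
    set s : ℝ := Real.sqrt (σ2 / b + G ^ 2) with hs
    have hsq : s ^ 2 = σ2 / b + G ^ 2 := Real.sq_sqrt hSpos.le
    have hspos : 0 < s := Real.sqrt_pos.mpr hSpos
    have hlampos : 0 < s / D x := div_pos hspos hDx
    have hθxmeas : Measurable fun ω => θ k ω - x := (hθmeas k).sub measurable_const
    have hIP_int : Integrable (fun ω => (inner ℝ (θ k ω - x) (mp k ω) : ℝ)) μ := by
      refine (integrable_const (D x * B)).mono'
        (hθxmeas.inner (hmpmeas k)).aestronglyMeasurable ?_
      filter_upwards [hDbd x k, hmpbd k] with ω h1 h2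
      calc ‖(inner ℝ (θ k ω - x) (mp k ω) : ℝ)‖ ≤ ‖θ k ω - x‖ * ‖mp k ω‖ := norm_inner_le_norm _ _
        _ ≤ D x * B := mul_le_mul h1 h2 (norm_nonneg _) hDx.le
    have hθ2_int : Integrable (fun ω => ‖θ k ω - x‖ ^ 2) μ := by
      refine (integrable_const (D x ^ 2)).mono' (hθxmeas.norm.pow_const 2).aestronglyMeasurable ?_
      filter_upwards [hDbd x k] with ω h1
      rw [Real.norm_eq_abs, abs_of_nonneg (sq_nonneg _)]
      nlinarith [norm_nonneg (θ k ω - x)]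
    have hθ2 : ∫ ω, ‖θ k ω - x‖ ^ 2 ∂μ ≤ D x ^ 2 := by
      calc ∫ ω, ‖θ k ω - x‖ ^ 2 ∂μ ≤ ∫ _ω, D x ^ 2 ∂μ := by
            refine integral_mono_ae hθ2_int (integrable_const _) ?_
            filter_upwards [hDbd x k] with ω h1
            nlinarith [norm_nonneg (θ k ω - x)]
        _ = D x ^ 2 := by simp
    have hpt : ∀ ω, (inner ℝ (θ k ω - x) (mp k ω) : ℝ)
        ≤ (s / D x * ‖θ k ω - x‖ ^ 2 + ‖mp k ω‖ ^ 2 / (s / D x)) / 2 := by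
      intro ω
      have h1 := real_inner_le_norm (θ k ω - x) (mp k ω)
      have h2 : 2 * (s / D x) * (inner ℝ (θ k ω - x) (mp k ω) : ℝ)
          ≤ (s / D x) ^ 2 * ‖θ k ω - x‖ ^ 2 + ‖mp k ω‖ ^ 2 := by
        nlinarith [sq_nonneg (s / D x * ‖θ k ω - x‖ - ‖mp k ω‖), norm_nonneg (θ k ω - x),
          norm_nonneg (mp k ω), hlampos]
      have h3 : (inner ℝ (θ k ω - x) (mp k ω) : ℝ)
          ≤ ((s / D x) ^ 2 * ‖θ k ω - x‖ ^ 2 + ‖mp k ω‖ ^ 2) / (2 * (s / D x)) := by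
        rw [le_div_iff₀ (by positivity)]
        linarith
      refine h3.trans_eq ?_
      field_simp
    calc ∫ ω, (inner ℝ (θ k ω - x) (mp k ω) : ℝ) ∂μ
        ≤ ∫ ω, (s / D x * ‖θ k ω - x‖ ^ 2 + ‖mp k ω‖ ^ 2 / (s / D x)) / 2 ∂μ :=
          integral_mono_ae hIP_int
            (((hθ2_int.const_mul _).add ((hmp2_int k).div_const _)).div_const 2)
            (Eventually.of_forall hpt)
      _ = (s / D x * ∫ ω, ‖θ k ω - x‖ ^ 2 ∂μ + (∫ ω, ‖mp k ω‖ ^ 2 ∂μ) / (s / D x)) / 2 := by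
          rw [integral_div, integral_add (hθ2_int.const_mul _) ((hmp2_int k).div_const _),
            integral_const_mul, integral_div]
      _ ≤ (s / D x * D x ^ 2 + (σ2 / b + G ^ 2) / (s / D x)) / 2 := by
          gcongr
          exact hmpS k
      _ = D x * s := by
          rw [← hsq]
          field_simp
          ring
  have hterm2 : 0 ≤ α k * Real.sqrt (1 - β2 k ^ (k + 1))
      / (2 * Real.sqrt vstar * β1 k * (1 - β1 k ^ (k + 1))) * (σ2 / b + G ^ 2) := by
    have h1 : (0:ℝ) < 1 - β1 k ^ (k + 1) :=
      sub_pos.mpr (pow_lt_one₀ hβ1k.1.le hβ1k.2 (Nat.succ_ne_zero k))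
    have h2 : (0:ℝ) < Real.sqrt vstar := Real.sqrt_pos.mpr hvstar
    exact mul_nonneg (div_nonneg (mul_nonneg (hαpos k).le (Real.sqrt_nonneg _))
      (mul_pos (mul_pos (mul_pos two_pos h2) hβ1k.1) h1).le) hSpos.le
  have hterm3 : 0 ≤ D x * G * ((1 - β1 k) / β1 k) :=
    mul_nonneg (mul_nonneg hDx.le hG.le)
      (div_nonneg (sub_pos.mpr hβ1k.2).le hβ1k.1.le)
  rcases Nat.eq_zero_or_pos d with hd | hd
  · subst hd
    have hzero : ∀ ω, (inner ℝ (θ k ω - x) (mp k ω) : ℝ) = 0 := by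
      intro ω
      simp [PiLp.inner_apply]
    have hint0 : ∫ ω, (inner ℝ (θ k ω - x) (mp k ω) : ℝ) ∂μ = 0 := by
      simp_rw [hzero]
      exact integral_zero _ _
    have hM14 : 0 ≤ M ^ ((1:ℝ) / 4) := by
      rcases lt_trichotomy M 0 with h | h | h
      · rw [Real.rpow_def_of_neg h]
        have hc : 0 < Real.cos ((1 / 4 : ℝ) * π) := by
          apply Real.cos_pos_of_mem_Ioo
          constructor <;> nlinarith [Real.pi_pos]
        positivity
      · rw [h, Real.zero_rpow (by norm_num)]
      · exact (Real.rpow_pos_of_pos h _).le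
    have hterm1 : 0 ≤ D x * M ^ ((1:ℝ) / 4) / (vstar ^ ((1:ℝ) / 4) * β1 k)
        * Real.sqrt (σ2 / b + G ^ 2) :=
      mul_nonneg (div_nonneg (mul_nonneg hDx.le hM14)
        (mul_nonneg (Real.rpow_pos_of_pos hvstar _).le hβ1k.1.le)) (Real.sqrt_nonneg _)
    rw [hint0]
    linarith
  · haveI : (ae μ).NeBot := ae_neBot.mpr (IsProbabilityMeasure.ne_zero μ)
    obtain ⟨ω0, hω0M, hω0v⟩ := ((hM 0).and (hvstarle 0)).exists
    have hMv : vstar ≤ M := by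
      have h1 := hω0M ⟨0, hd⟩
      have h2 := hω0v ⟨0, hd⟩
      have h3 := hv0 ω0 ⟨0, hd⟩
      have h4 := (hβ2mem 0).1
      nlinarith [sq_nonneg (g 0 ω0 ⟨0, hd⟩)]
    have h14 : vstar ^ ((1:ℝ) / 4) * β1 k ≤ M ^ ((1:ℝ) / 4) := by
      have h5 := Real.rpow_le_rpow hvstar.le hMv (by norm_num : (0:ℝ) ≤ 1 / 4)
      nlinarith [Real.rpow_pos_of_pos hvstar ((1:ℝ) / 4), hβ1k.1, hβ1k.2]
    have hterm1 : D x * Real.sqrt (σ2 / b + G ^ 2)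
        ≤ D x * M ^ ((1:ℝ) / 4) / (vstar ^ ((1:ℝ) / 4) * β1 k)
          * Real.sqrt (σ2 / b + G ^ 2) := by
      apply mul_le_mul_of_nonneg_right _ (Real.sqrt_nonneg _)
      rw [le_div_iff₀ (mul_pos (Real.rpow_pos_of_pos hvstar _) hβ1k.1)]
      exact mul_le_mul_of_nonneg_left h14 hDx.le
    linarith
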